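/- Let α, β, γ ∈ ℂ satisfy 2 * |β|^2 = 1 and |α|^2 + 2 * |γ|^2 = 1, let φ ∈ ℝ, and define the 3×3 complex matrices A₁ = !![0, α, 0; β, γ, 0; 0, 0, -γ] and A₂ = !![0, 0, α; 0, 0, -γ; β * exp(-2*I*φ), -γ * exp(-2*I*φ), 0]. Then A₁ᴴ * A₁ + A₂ᴴ * A₂ = 1. -/

import Mathlib

open Matrix

theorem stmt7 (α β γ : ℂ) (φ : ℝ)
    (hβ : 2 * ‖β‖ ^ 2 = 1)
    (hαγ : ‖α‖ ^ 2 + 2 * ‖γ‖ ^ 2 = 1)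
    (A₁ A₂ : Matrix (Fin 3) (Fin 3) ℂ)
    (hA₁ : A₁ = !![0, α, 0; β, γ, 0; 0, 0, -γ])
    (hA₂ : A₂ = !![0, 0, α; 0, 0, -γ;
      β * Complex.exp (-2 * Complex.I * φ), -γ * Complex.exp (-2 * Complex.I * φ), 0]) :
    A₁ᴴ * A₁ + A₂ᴴ * A₂ = 1 := by
  have hb : (starRingEnd ℂ) β * β = 1/2 := by
    rw [Complex.sq_norm] at hβ
    rw [mul_comm, Complex.mul_conj]
    have : Complex.normSq β = 1/2 := by linarith
    rw [this]; norm_num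
  have hac : (starRingEnd ℂ) α * α + 2 * ((starRingEnd ℂ) γ * γ) = 1 := by
    rw [Complex.sq_norm, Complex.sq_norm] at hαγ
    rw [mul_comm _ α, mul_comm _ γ, Complex.mul_conj, Complex.mul_conj]
    norm_cast
  have he : (starRingEnd ℂ) (Complex.exp (-(2 * Complex.I * φ))) *
      Complex.exp (-(2 * Complex.I * φ)) = 1 := by
    rw [← Complex.exp_conj, ← Complex.exp_add]
    rw [show (starRingEnd ℂ) (-(2 * Complex.I * φ)) + -(2 * Complex.I * φ) = 0 by
      simp only [_root_.map_mul, map_neg, map_ofNat, Complex.conj_I, Complex.conj_ofReal]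
      ring]
    exact Complex.exp_zero
  subst hA₁ hA₂
  ext i j
  fin_cases i <;> fin_cases j <;>
    simp [Matrix.mul_apply, Fin.sum_univ_three, Matrix.one_apply, _root_.map_mul] <;>
  first
  | linear_combination (1 + (starRingEnd ℂ) (Complex.exp (-(2 * Complex.I * φ))) * Complex.exp (-(2 * Complex.I * φ))) * hb + (1/2 : ℂ) * he
  | linear_combination -((starRingEnd ℂ) β * γ) * he
  | linear_combination -((starRingEnd ℂ) γ * β) * he
  | linear_combination hac + ((starRingEnd ℂ) γ * γ) * he
  | linear_combination hac
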